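/- Let X be an infinite one-sided shift space over a finite alphabet with σ(X) = X, whose set Sp_l(X) of left special elements is finite and contains no periodic point. Then the number of right tail equivalence classes 𝔍_X = Sp_l(X)/∼_rte is finite and at least 1; equivalently, Sp_l(X) is nonempty. -/

import Mathlib

open Function Set

variable {A : Type*}

/-- The one-sided shift map. -/
def shiftMap (x : ℕ → A) : ℕ → A := fun n => x (n + 1)

/-- Prepend a finite word to a one-sided sequence. -/
def prependWord (μ : List A) (x : ℕ → A) : ℕ → A :=
  fun n => if h : n < μ.length then μ.get ⟨n, h⟩ else x (n - μ.length)

/-- `PastSet X l x` is the set `P_l(x)` of words `μ` of length `l` with `μx ∈ X`. -/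
def PastSet (X : Set (ℕ → A)) (l : ℕ) (x : ℕ → A) : Set (List A) :=
  {μ | μ.length = l ∧ prependWord μ x ∈ X}

/-- A point is left special if it has at least two shift-preimages in `X`. -/
def IsLeftSpecial (X : Set (ℕ → A)) (x : ℕ → A) : Prop :=
  x ∈ X ∧ ∃ y z, y ∈ X ∧ z ∈ X ∧ y ≠ z ∧ shiftMap y = x ∧ shiftMap z = x

/-- The set of left special elements of `X`. -/
def SpL (X : Set (ℕ → A)) : Set (ℕ → A) := {x | IsLeftSpecial X x}

/-- A point is periodic if `σ^n x = x` for some `n ≥ 1`. -/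
def IsPer (x : ℕ → A) : Prop := ∃ n ≥ 1, shiftMap^[n] x = x

/-- The language of `X`: finite words occurring as factors of points of `X`. -/
def Lang (X : Set (ℕ → A)) : Set (List A) :=
  {μ | ∃ x ∈ X, ∃ n : ℕ, ∀ i : Fin μ.length, x (n + i) = μ.get i}

/-- The two-sided shift space associated with `X` (inverse limit identification). -/
def twoSided (X : Set (ℕ → A)) : Set (ℤ → A) :=
  {z | ∀ n : ℤ, (fun i : ℕ => z (n + i)) ∈ X}

/-- Left special elements of a two-sided shift space. -/
def SpLZ (Y : Set (ℤ → A)) : Set (ℤ → A) :=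
  {z | z ∈ Y ∧ ∃ z' ∈ Y, z' (-1) ≠ z (-1) ∧ ∀ i : ℕ, z' i = z i}

/-- Right tail equivalence. -/
def Rte (x y : ℕ → A) : Prop := ∃ M M' : ℕ, shiftMap^[M] x = shiftMap^[M'] y

/-- The set of length-`n` prefixes of points of `X`. -/
def resW (X : Set (ℕ → A)) (n : ℕ) : Set (Fin n → A) :=
  (fun (x : ℕ → A) (i : Fin n) => x i) '' X

/-- If `X` has no left special point, some finite window of coordinates `1..N`
determines coordinate `0` for points of `X`. -/
lemma exists_window [Finite A] [TopologicalSpace A] [DiscreteTopology A]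
    (X : Set (ℕ → A)) (hcl : IsClosed X) (hseq : shiftMap '' X = X)
    (hSp : ¬ (SpL X).Nonempty) :
    ∃ N : ℕ, ∀ y ∈ X, ∀ z ∈ X, (∀ i, 1 ≤ i → i ≤ N → y i = z i) → y 0 = z 0 := by
  classical
  by_contra hN
  push_neg at hN
  set K : ℕ → Set ((ℕ → A) × (ℕ → A)) := fun N =>
    {p | (p.1 ∈ X ∧ p.2 ∈ X ∧ ∀ i, 1 ≤ i → i ≤ N → p.1 i = p.2 i) ∧ p.1 0 ≠ p.2 0}
    with hKdef
  have hKcl : ∀ N, IsClosed (K N) := by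
    intro N
    have hset : K N = ({p : (ℕ → A) × (ℕ → A) | p.1 ∈ X} ∩ {p | p.2 ∈ X} ∩
        ⋂ i : ℕ, {p : (ℕ → A) × (ℕ → A) | 1 ≤ i → i ≤ N → p.1 i = p.2 i}) ∩
        {p : (ℕ → A) × (ℕ → A) | p.1 0 ≠ p.2 0} := by
      ext p
      simp only [hKdef, Set.mem_setOf_eq, Set.mem_inter_iff, Set.mem_iInter]
      tauto
    rw [hset]
    refine IsClosed.inter (((hcl.preimage continuous_fst).inter
      (hcl.preimage continuous_snd)).inter (isClosed_iInter fun i => ?_)) ?_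
    · by_cases h1 : 1 ≤ i ∧ i ≤ N
      · have : {p : (ℕ → A) × (ℕ → A) | 1 ≤ i → i ≤ N → p.1 i = p.2 i}
            = {p : (ℕ → A) × (ℕ → A) | p.1 i = p.2 i} := by
          ext p; simp [h1.1, h1.2]
        rw [this]
        exact isClosed_eq ((continuous_apply i).comp continuous_fst)
          ((continuous_apply i).comp continuous_snd)
      · have : {p : (ℕ → A) × (ℕ → A) | 1 ≤ i → i ≤ N → p.1 i = p.2 i} = Set.univ := by
          ext p
          simp only [Set.mem_setOf_eq, Set.mem_univ, iff_true]
          intro ha hb; exact absurd ⟨ha, hb⟩ h1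
        rw [this]; exact isClosed_univ
    · have hc : Continuous (fun p : (ℕ → A) × (ℕ → A) => (p.1 0, p.2 0)) :=
        Continuous.prodMk ((continuous_apply 0).comp continuous_fst)
          ((continuous_apply 0).comp continuous_snd)
      exact IsClosed.preimage hc (isClosed_discrete {q : A × A | q.1 ≠ q.2})
  have hKd : ∀ N, K (N + 1) ⊆ K N := by
    intro N p hp
    exact ⟨⟨hp.1.1, hp.1.2.1, fun i h1 h2 => hp.1.2.2 i h1 (h2.trans (Nat.le_succ N))⟩, hp.2⟩
  have hKne : ∀ N, (K N).Nonempty := by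
    intro N
    obtain ⟨y, hy, z, hz, hagree, hne0⟩ := hN N
    exact ⟨(y, z), ⟨⟨hy, hz, hagree⟩, hne0⟩⟩
  have hK0 : IsCompact (K 0) := (hKcl 0).isCompact
  obtain ⟨p, hp⟩ := IsCompact.nonempty_iInter_of_sequence_nonempty_isCompact_isClosed
    K hKd hKne hK0 hKcl
  rw [Set.mem_iInter] at hp
  have hy : p.1 ∈ X := (hp 0).1.1
  have hz : p.2 ∈ X := (hp 0).1.2.1
  have hne0 : p.1 0 ≠ p.2 0 := (hp 0).2
  have hagree : ∀ i, 1 ≤ i → p.1 i = p.2 i := fun i h1 => (hp i).1.2.2 i h1 le_rfl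
  have hshift : shiftMap p.1 = shiftMap p.2 := by
    funext n
    exact hagree (n + 1) (Nat.succ_le_succ (Nat.zero_le n))
  have hmem : shiftMap p.1 ∈ X := by
    rw [← hseq]; exact Set.mem_image_of_mem _ hy
  exact hSp ⟨shiftMap p.1, hmem, p.1, p.2, hy, hz,
    fun h => hne0 (congrFun h 0), rfl, hshift.symm⟩

/-- The main content: an infinite one-sided shift with surjective shift has a
left special point. -/
lemma spl_nonempty [Finite A] [TopologicalSpace A] [DiscreteTopology A]
    (X : Set (ℕ → A)) (hcl : IsClosed X) (hseq : shiftMap '' X = X)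
    (hinf : X.Infinite) : (SpL X).Nonempty := by
  classical
  by_contra hSp
  obtain ⟨N, hN⟩ := exists_window X hcl hseq hSp
  -- the prefix counts are nonincreasing from `N` on
  have hstep : ∀ n, N ≤ n → (resW X (n + 1)).ncard ≤ (resW X n).ncard := by
    intro n hn
    set drop : (Fin (n + 1) → A) → (Fin n → A) := fun w i => w i.succ with hdrop
    have hsub : drop '' resW X (n + 1) ⊆ resW X n := by
      rintro _ ⟨_, ⟨x, hx, rfl⟩, rfl⟩
      refine ⟨shiftMap x, ?_, ?_⟩
      · rw [← hseq]; exact Set.mem_image_of_mem _ hx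
      · funext i; simp [hdrop, shiftMap]
    have hinj : Set.InjOn drop (resW X (n + 1)) := by
      rintro _ ⟨x, hx, rfl⟩ _ ⟨x', hx', rfl⟩ heq
      have htail : ∀ i : Fin n, x (i + 1) = x' (i + 1) := by
        intro i
        have := congrFun heq i
        simpa [hdrop] using this
      have h0 : x 0 = x' 0 := by
        apply hN x hx x' hx'
        intro i h1 h2
        have hi : i - 1 < n := by omega
        have := htail ⟨i - 1, hi⟩
        simpa [Nat.sub_add_cancel h1] using this
      funext i
      refine Fin.cases ?_ (fun j => ?_) i
      · simpa using h0
      · simpa using htail j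
    calc (resW X (n + 1)).ncard = (drop '' resW X (n + 1)).ncard :=
          (Set.ncard_image_of_injOn hinj).symm
      _ ≤ (resW X n).ncard := Set.ncard_le_ncard hsub (Set.toFinite _)
  have hbound : ∀ n, N ≤ n → (resW X n).ncard ≤ (resW X N).ncard := by
    intro n hn
    induction n, hn using Nat.le_induction with
    | base => exact le_rfl
    | succ m hm ih => exact (hstep m hm).trans ih
  -- pigeonhole: X infinite gives too many distinct prefixes
  set C := (resW X N).ncard with hC
  obtain ⟨S, hSX, hSfin, hScard⟩ := hinf.exists_subset_ncard_eq (C + 1)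
  set g : (ℕ → A) × (ℕ → A) → ℕ := fun p =>
    if h : p.1 ≠ p.2 then Nat.find (Function.ne_iff.mp h) else 0 with hg
  set F := (hSfin.prod hSfin).toFinset with hF
  set M := N + (F.sup g + 1) with hM
  have hMN : N ≤ M := by omega
  have hinjS : Set.InjOn (fun (x : ℕ → A) (i : Fin M) => x i) S := by
    intro x hx y hy heq
    by_contra hxy
    have hmemF : (x, y) ∈ F := by
      rw [hF, Set.Finite.mem_toFinset]; exact ⟨hx, hy⟩
    have hglt : g (x, y) < M := by
      have := Finset.le_sup (f := g) hmemF
      omega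
    have hne : x (g (x, y)) ≠ y (g (x, y)) := by
      rw [hg]
      simp only [ne_eq, hxy, not_false_eq_true, dif_pos]
      exact Nat.find_spec (Function.ne_iff.mp hxy)
    exact hne (congrFun heq ⟨g (x, y), hglt⟩)
  have himg : (fun (x : ℕ → A) (i : Fin M) => x i) '' S ⊆ resW X M :=
    Set.image_mono hSX
  have : C + 1 ≤ C := by
    calc C + 1 = S.ncard := hScard.symm
      _ = ((fun (x : ℕ → A) (i : Fin M) => x i) '' S).ncard :=
          (Set.ncard_image_of_injOn hinjS).symm
      _ ≤ (resW X M).ncard := Set.ncard_le_ncard himg (Set.toFinite _)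
      _ ≤ C := hbound M hMN
  omega

/-- for an infinite one-sided shift with `Sp_l(X)` finite and without
periodic points, `Sp_l(X)` is nonempty and has finitely many (at least one) right tail
equivalence classes. -/
theorem stmt15 [Finite A] [TopologicalSpace A] [DiscreteTopology A]
    (X : Set (ℕ → A)) (hne : X.Nonempty) (hcl : IsClosed X)
    (hseq : shiftMap '' X = X) (hinf : X.Infinite)
    (hfin : (SpL X).Finite) (hper : ∀ x ∈ SpL X, ¬ IsPer x) :
    (SpL X).Nonempty ∧
      Finite (Quot (fun a b : {x // x ∈ SpL X} => Rte a.1 b.1)) ∧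
      Nonempty (Quot (fun a b : {x // x ∈ SpL X} => Rte a.1 b.1)) := by
  obtain ⟨x, hx⟩ := spl_nonempty X hcl hseq hinf
  have : Finite {x // x ∈ SpL X} := hfin.to_subtype
  exact ⟨⟨x, hx⟩, Quot.finite _, ⟨Quot.mk _ ⟨x, hx⟩⟩⟩
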